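/- Lemma (martingale separation, deterministic form). Let d ≥ 1, ε > 0, p ∈ ℕ^d, Σ a positive semi-definite d×d real matrix, B ∈ ℝ^d with B_i > 0 for all i, and let a_1,…,a_t ∈ {0,1}^d and x_1,…,x_t ∈ ℝ^d be arbitrary. Define Z_{s,p} = Σ_{k=1}^s d_{a_k} Σ d_{a_k} + d_Σ·diag(((1+ε)^{p_i})_{i∈[d]}) + d·d_B (a positive definite matrix for every s ≥ 0). Then ‖Σ_{s=1}^t d_{a_s} x_s‖²_{Z_{t,p}^{-1}} ≤ 2 Σ_{s=1}^t (d_{a_s} x_s)ᵀ Z_{s−1,p}^{-1} ( Σ_{k=1}^{s−1} d_{a_k} x_k ) + Σ_{s=1}^t ‖d_{a_s} x_s‖²_{Z_{s−1,p}^{-1}}. -/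

import Mathlib

open Matrix Finset

noncomputable section

/-- `diag(a)`. -/
def dmat {d : ℕ} (a : Fin d → ℝ) : Matrix (Fin d) (Fin d) ℝ := Matrix.diagonal a

/-- Quadratic form `xᵀ M x`. -/
def qsq {d : ℕ} (M : Matrix (Fin d) (Fin d) ℝ) (x : Fin d → ℝ) : ℝ := x ⬝ᵥ M.mulVec x

/-- Peeling design matrix `Z_{s,p}` built from a deterministic sequence of actions. -/
def Zdet {d : ℕ} (a : ℕ → Fin d → ℝ) (S : Matrix (Fin d) (Fin d) ℝ) (B : Fin d → ℝ)
    (ε : ℝ) (p : Fin d → ℕ) (s : ℕ) : Matrix (Fin d) (Fin d) ℝ :=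
  (∑ k ∈ Finset.Icc 1 s, dmat (a k) * S * dmat (a k))
    + Matrix.diagonal (fun i => S i i) * Matrix.diagonal (fun i => (1+ε)^(p i))
    + (d : ℝ) • Matrix.diagonal fun i => (B i)^2



-- diag entries of PSD are nonneg
lemma diag_nn {d : ℕ} {S : Matrix (Fin d) (Fin d) ℝ} (hS : S.PosSemidef) (i : Fin d) :
    0 ≤ S i i := by
  have := hS.dotProduct_mulVec_nonneg (Pi.single i 1)
  simpa [mulVec, dotProduct, Pi.single_apply] using this

lemma psd_sum {d : ℕ} (s : Finset ℕ) (f : ℕ → Matrix (Fin d) (Fin d) ℝ)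
    (h : ∀ k ∈ s, (f k).PosSemidef) : (∑ k ∈ s, f k).PosSemidef := by
  classical
  induction s using Finset.induction with
  | empty => simpa using (Matrix.PosSemidef.zero : (0 : Matrix (Fin d) (Fin d) ℝ).PosSemidef)
  | insert _ _ hx ih =>
    rw [Finset.sum_insert hx]
    exact (h _ (Finset.mem_insert_self _ _)).add (ih fun k hk => h k (Finset.mem_insert_of_mem hk))

lemma Zdet_posDef {d : ℕ} (hd : 1 ≤ d) (ε : ℝ) (hε : 0 < ε) (p : Fin d → ℕ)
    {S : Matrix (Fin d) (Fin d) ℝ} (hS : S.PosSemidef)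
    {B : Fin d → ℝ} (hB : ∀ i, 0 < B i)
    (a : ℕ → Fin d → ℝ) (s : ℕ) : (Zdet a S B ε p s).PosDef := by
  unfold Zdet
  apply Matrix.PosDef.posSemidef_add
  · apply Matrix.PosSemidef.add
    · apply psd_sum
      intro k _
      have h := hS.mul_mul_conjTranspose_same (dmat (a k))
      have : (dmat (a k))ᴴ = dmat (a k) := by
        simp [dmat, Matrix.diagonal_conjTranspose]
      rwa [this] at h
    · rw [Matrix.diagonal_mul_diagonal]
      refine Matrix.posSemidef_diagonal_iff.mpr fun i => ?_
      exact mul_nonneg (diag_nn hS i) (pow_nonneg (by linarith) _)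
  · rw [← Matrix.diagonal_smul]
    refine Matrix.posDef_diagonal_iff.mpr fun i => ?_
    have : (0:ℝ) < d := by exact_mod_cast Nat.lt_of_lt_of_le Nat.zero_lt_one hd
    exact mul_pos this (pow_pos (hB i) 2)

lemma key_ineq {d : ℕ} {A : Matrix (Fin d) (Fin d) ℝ} (hA : A.PosDef)
    (x y : Fin d → ℝ) :
    2 * (y ⬝ᵥ x) - y ⬝ᵥ A.mulVec y ≤ x ⬝ᵥ A⁻¹.mulVec x := by
  have hdet : IsUnit A.det := isUnit_iff_ne_zero.mpr hA.det_pos.ne'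
  set z := A⁻¹.mulVec x with hz
  have hAz : A.mulVec z = x := by
    rw [hz, Matrix.mulVec_mulVec, Matrix.mul_nonsing_inv _ hdet, Matrix.one_mulVec]
  have hsym : Aᵀ = A := by
    have := hA.isHermitian
    simpa [Matrix.IsHermitian, Matrix.conjTranspose_eq_transpose_of_trivial] using this
  have h0 : 0 ≤ (y - z) ⬝ᵥ A.mulVec (y - z) := by
    simpa using hA.posSemidef.dotProduct_mulVec_nonneg (y - z)
  have hswap : z ⬝ᵥ A.mulVec y = y ⬝ᵥ A.mulVec z := by
    rw [Matrix.dotProduct_mulVec, ← Matrix.mulVec_transpose, hsym, dotProduct_comm]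
  have hexp : (y - z) ⬝ᵥ A.mulVec (y - z)
      = y ⬝ᵥ A.mulVec y - 2 * (y ⬝ᵥ x) + x ⬝ᵥ A⁻¹.mulVec x := by
    rw [Matrix.mulVec_sub, sub_dotProduct, dotProduct_sub,
      dotProduct_sub, hswap, hAz]
    have : z ⬝ᵥ x = x ⬝ᵥ A⁻¹.mulVec x := by rw [hz, dotProduct_comm]
    rw [this]
    ring
  linarith [hexp ▸ h0]

lemma qsq_inv_add_le {d : ℕ} {A P : Matrix (Fin d) (Fin d) ℝ}
    (hA : A.PosDef) (hP : P.PosSemidef) (x : Fin d → ℝ) :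
    qsq (A + P)⁻¹ x ≤ qsq A⁻¹ x := by
  have hB : (A + P).PosDef := hA.add_posSemidef hP
  have hdet : IsUnit (A + P).det := isUnit_iff_ne_zero.mpr hB.det_pos.ne'
  set y := (A + P)⁻¹.mulVec x with hy
  have hxy : (A + P).mulVec y = x := by
    rw [hy, Matrix.mulVec_mulVec, Matrix.mul_nonsing_inv _ hdet, Matrix.one_mulVec]
  have h1 : qsq (A + P)⁻¹ x = y ⬝ᵥ (A + P).mulVec y := by
    have : qsq (A + P)⁻¹ x = x ⬝ᵥ y := rfl
    rw [this, dotProduct_comm, ← hxy]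
  have h2 : 2 * (y ⬝ᵥ x) - y ⬝ᵥ A.mulVec y ≤ x ⬝ᵥ A⁻¹.mulVec x := key_ineq hA x y
  have h3 : y ⬝ᵥ x = y ⬝ᵥ (A + P).mulVec y := by rw [hxy]
  have h4 : y ⬝ᵥ (A + P).mulVec y = y ⬝ᵥ A.mulVec y + y ⬝ᵥ P.mulVec y := by
    rw [Matrix.add_mulVec, dotProduct_add]
  have h5 : 0 ≤ y ⬝ᵥ P.mulVec y := by simpa using hP.dotProduct_mulVec_nonneg y
  rw [h1]
  rw [h3, h4] at h2
  unfold qsq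
  linarith

lemma sandwich_psd {d : ℕ} {S : Matrix (Fin d) (Fin d) ℝ} (hS : S.PosSemidef)
    (v : Fin d → ℝ) : (dmat v * S * dmat v).PosSemidef := by
  have h := hS.mul_mul_conjTranspose_same (dmat v)
  have hh : (dmat v)ᴴ = dmat v := by simp [dmat, Matrix.diagonal_conjTranspose]
  rwa [hh] at h

lemma qsq_add {d : ℕ} {W : Matrix (Fin d) (Fin d) ℝ} (hW : Wᵀ = W) (u v : Fin d → ℝ) :
    qsq W (u + v) = qsq W u + 2 * (v ⬝ᵥ W.mulVec u) + qsq W v := by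
  unfold qsq
  rw [Matrix.mulVec_add, dotProduct_add, add_dotProduct, add_dotProduct]
  have h : u ⬝ᵥ W.mulVec v = v ⬝ᵥ W.mulVec u := by
    rw [Matrix.dotProduct_mulVec, ← Matrix.mulVec_transpose, hW, dotProduct_comm]
  rw [h]; ring

/-- Lemma (martingale separation, deterministic form):
`‖Σ_{s=1}^t d_{a_s} x_s‖²_{Z_{t,p}^{-1}}
  ≤ 2 Σ_s (d_{a_s} x_s)ᵀ Z_{s−1,p}^{-1} (Σ_{k<s} d_{a_k} x_k) + Σ_s ‖d_{a_s} x_s‖²_{Z_{s−1,p}^{-1}}`. -/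
theorem martingale_separation {d : ℕ} (hd : 1 ≤ d) (ε : ℝ) (hε : 0 < ε) (p : Fin d → ℕ)
    (S : Matrix (Fin d) (Fin d) ℝ) (hS : S.PosSemidef)
    (B : Fin d → ℝ) (hB : ∀ i, 0 < B i)
    (t : ℕ) (a : ℕ → Fin d → ℝ) (ha : ∀ s i, a s i = 0 ∨ a s i = 1)
    (x : ℕ → Fin d → ℝ) :
    qsq (Zdet a S B ε p t)⁻¹ (∑ s ∈ Finset.Icc 1 t, (dmat (a s)).mulVec (x s))
      ≤ 2 * ∑ s ∈ Finset.Icc 1 t,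
            ((dmat (a s)).mulVec (x s)) ⬝ᵥ
              (Zdet a S B ε p (s-1))⁻¹.mulVec
                (∑ k ∈ Finset.Icc 1 (s-1), (dmat (a k)).mulVec (x k))
        + ∑ s ∈ Finset.Icc 1 t, qsq (Zdet a S B ε p (s-1))⁻¹ ((dmat (a s)).mulVec (x s)) := by
  have hZ : ∀ s, (Zdet a S B ε p s).PosDef := fun s => Zdet_posDef hd ε hε p hS hB a s
  have hsym : ∀ s, ((Zdet a S B ε p s)⁻¹)ᵀ = (Zdet a S B ε p s)⁻¹ := by
    intro s
    rw [Matrix.transpose_nonsing_inv]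
    congr 1
    have := (hZ s).isHermitian
    simpa [Matrix.IsHermitian, Matrix.conjTranspose_eq_transpose_of_trivial] using this
  have hstep : ∀ s : ℕ, Zdet a S B ε p (s+1)
      = Zdet a S B ε p s + dmat (a (s+1)) * S * dmat (a (s+1)) := by
    intro s
    unfold Zdet
    rw [Finset.sum_Icc_succ_top (Nat.le_add_left 1 s)]
    abel
  induction t with
  | zero => simp [qsq]
  | succ t ih =>
    have hM : (∑ s ∈ Finset.Icc 1 (t+1), (dmat (a s)).mulVec (x s))
        = (∑ s ∈ Finset.Icc 1 t, (dmat (a s)).mulVec (x s)) + (dmat (a (t+1))).mulVec (x (t+1)) :=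
      Finset.sum_Icc_succ_top (Nat.le_add_left 1 t) _
    have h1 : qsq (Zdet a S B ε p (t+1))⁻¹ (∑ s ∈ Finset.Icc 1 (t+1), (dmat (a s)).mulVec (x s))
        ≤ qsq (Zdet a S B ε p t)⁻¹ (∑ s ∈ Finset.Icc 1 (t+1), (dmat (a s)).mulVec (x s)) := by
      rw [hstep t]
      exact qsq_inv_add_le (hZ t) (sandwich_psd hS _) _
    have h2 : qsq (Zdet a S B ε p t)⁻¹ (∑ s ∈ Finset.Icc 1 (t+1), (dmat (a s)).mulVec (x s))
        = qsq (Zdet a S B ε p t)⁻¹ (∑ s ∈ Finset.Icc 1 t, (dmat (a s)).mulVec (x s))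
          + 2 * (((dmat (a (t+1))).mulVec (x (t+1))) ⬝ᵥ
              (Zdet a S B ε p t)⁻¹.mulVec (∑ s ∈ Finset.Icc 1 t, (dmat (a s)).mulVec (x s)))
          + qsq (Zdet a S B ε p t)⁻¹ ((dmat (a (t+1))).mulVec (x (t+1))) := by
      rw [hM]
      exact qsq_add (hsym t) _ _
    rw [hM] at h1 h2
    have hA : (∑ s ∈ Finset.Icc 1 (t+1),
          ((dmat (a s)).mulVec (x s)) ⬝ᵥ (Zdet a S B ε p (s-1))⁻¹.mulVec
            (∑ k ∈ Finset.Icc 1 (s-1), (dmat (a k)).mulVec (x k)))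
        = (∑ s ∈ Finset.Icc 1 t,
          ((dmat (a s)).mulVec (x s)) ⬝ᵥ (Zdet a S B ε p (s-1))⁻¹.mulVec
            (∑ k ∈ Finset.Icc 1 (s-1), (dmat (a k)).mulVec (x k)))
          + ((dmat (a (t+1))).mulVec (x (t+1))) ⬝ᵥ
              (Zdet a S B ε p t)⁻¹.mulVec (∑ k ∈ Finset.Icc 1 t, (dmat (a k)).mulVec (x k)) := by
      rw [Finset.sum_Icc_succ_top (Nat.le_add_left 1 t)]
      simp
    have hC : (∑ s ∈ Finset.Icc 1 (t+1), qsq (Zdet a S B ε p (s-1))⁻¹ ((dmat (a s)).mulVec (x s)))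
        = (∑ s ∈ Finset.Icc 1 t, qsq (Zdet a S B ε p (s-1))⁻¹ ((dmat (a s)).mulVec (x s)))
          + qsq (Zdet a S B ε p t)⁻¹ ((dmat (a (t+1))).mulVec (x (t+1))) := by
      rw [Finset.sum_Icc_succ_top (Nat.le_add_left 1 t)]
      simp
    rw [hM, hA, hC]
    linarith [ih]

end
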